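/- Let G be a locally indicable group with normal subgroup N, let ≤₁ be a Conradian left-order of N and ≤₂ a Conradian left-order of G/N. Then P = P_{≤₁} ∪ {g ∈ G | eN <₂ gN} is the positive cone of a left-order ≤ of G; a subgroup U of G is convex with respect to ≤ if and only if either U ⊆ N and U is convex in N w.r.t. ≤₁, or N ⊆ U and U/N is convex in G/N w.r.t. ≤₂; and ≤ is Conradian. -/
import Mathlib


section Generic
variable {H : Type*} [Group H] [LinearOrder H]
variable (hinv : ∀ a b c : H, a ≤ b → c * a ≤ c * b)
include hinv

lemma gen_mul_lt {a b : H} (c : H) (h : a < b) : c * a < c * b :=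
  lt_of_le_of_ne (hinv a b c h.le) fun he => h.ne (mul_left_cancel he)

lemma gen_one_le {a b : H} (h : a ≤ b) : 1 ≤ a⁻¹ * b := by
  have := hinv a b a⁻¹ h; rwa [inv_mul_cancel] at this

lemma gen_one_lt {a b : H} (h : a < b) : 1 < a⁻¹ * b := by
  have := gen_mul_lt hinv a⁻¹ h; rwa [inv_mul_cancel] at this

lemma gen_le_of {a b : H} (h : 1 ≤ a⁻¹ * b) : a ≤ b := by
  have := hinv 1 (a⁻¹ * b) a h; rwa [mul_one, mul_inv_cancel_left] at this

lemma gen_lt_of {a b : H} (h : 1 < a⁻¹ * b) : a < b := by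
  have := gen_mul_lt hinv a h; rwa [mul_one, mul_inv_cancel_left] at this

lemma gen_one_le_mul {a b : H} (ha : 1 ≤ a) (hb : 1 ≤ b) : 1 ≤ a * b :=
  ha.trans (by have := hinv 1 b a hb; rwa [mul_one] at this)

lemma gen_one_lt_mul {a b : H} (ha : 1 < a) (hb : 1 < b) : 1 < a * b :=
  ha.trans (by have := gen_mul_lt hinv a hb; rwa [mul_one] at this)

lemma gen_one_le_inv {a : H} (h : a ≤ 1) : 1 ≤ a⁻¹ := by
  have := hinv a 1 a⁻¹ h; rwa [inv_mul_cancel, mul_one] at this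

lemma gen_one_lt_inv {a : H} (h : a < 1) : 1 < a⁻¹ := by
  have := gen_mul_lt hinv a⁻¹ h; rwa [inv_mul_cancel, mul_one] at this

lemma gen_not_both {a : H} (h1 : 1 < a) (h2 : 1 < a⁻¹) : False := by
  have := gen_mul_lt hinv a h2
  rw [mul_one, mul_inv_cancel] at this
  exact absurd h1 this.asymm

end Generic

abbrev myP {G : Type*} [Group G] (N : Subgroup G) [N.Normal] [LinearOrder ↥N]
    [LinearOrder (G ⧸ N)] : Set G :=
  {g : G | ∃ h : ↥N, (h : G) = g ∧ 1 ≤ h} ∪ {g : G | (1 : G ⧸ N) < QuotientGroup.mk g}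

section PAux

variable {G : Type*} [Group G] {N : Subgroup G} [N.Normal]
variable [LinearOrder ↥N] [LinearOrder (G ⧸ N)]

lemma mem_myP_of_mem {g : G} (hg : g ∈ N) : g ∈ myP N ↔ 1 ≤ (⟨g, hg⟩ : ↥N) := by
  constructor
  · rintro (⟨h, rfl, hh⟩ | hlt)
    · exact hh
    · exact absurd ((QuotientGroup.eq_one_iff g).mpr hg)
        (show (1 : G ⧸ N) < QuotientGroup.mk g from hlt).ne'
  · intro h; exact Or.inl ⟨⟨g, hg⟩, rfl, h⟩

lemma mem_myP_of_not_mem {g : G} (hg : g ∉ N) :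
    g ∈ myP N ↔ (1 : G ⧸ N) < QuotientGroup.mk g := by
  constructor
  · rintro (⟨h, rfl, _⟩ | hlt)
    · exact absurd h.2 hg
    · exact hlt
  · exact Or.inr

lemma one_mem_myP : (1 : G) ∈ myP N :=
  Or.inl ⟨1, OneMemClass.coe_one _, le_refl 1⟩

lemma mul_mem_myP (h1 : ∀ a b c : ↥N, a ≤ b → c * a ≤ c * b)
    (h2 : ∀ a b c : G ⧸ N, a ≤ b → c * a ≤ c * b)
    {a b : G} (ha : a ∈ myP N) (hb : b ∈ myP N) : a * b ∈ myP N := by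
  by_cases haN : a ∈ N <;> by_cases hbN : b ∈ N
  · rw [mem_myP_of_mem haN] at ha
    rw [mem_myP_of_mem hbN] at hb
    rw [mem_myP_of_mem (mul_mem haN hbN)]
    exact gen_one_le_mul h1 ha hb
  · rw [mem_myP_of_not_mem hbN] at hb
    have habN : a * b ∉ N := fun h => hbN (by simpa using mul_mem (inv_mem haN) h)
    rw [mem_myP_of_not_mem habN, QuotientGroup.mk_mul,
      (QuotientGroup.eq_one_iff a).mpr haN, one_mul]
    exact hb
  · rw [mem_myP_of_not_mem haN] at ha
    have habN : a * b ∉ N := fun h => haN (by simpa using mul_mem h (inv_mem hbN))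
    rw [mem_myP_of_not_mem habN, QuotientGroup.mk_mul,
      (QuotientGroup.eq_one_iff b).mpr hbN, mul_one]
    exact ha
  · rw [mem_myP_of_not_mem haN] at ha
    rw [mem_myP_of_not_mem hbN] at hb
    have hlt : (1 : G ⧸ N) < QuotientGroup.mk a * QuotientGroup.mk b :=
      gen_one_lt_mul h2 ha hb
    have habN : a * b ∉ N := by
      intro h
      have := (QuotientGroup.eq_one_iff (a * b)).mpr h
      rw [QuotientGroup.mk_mul] at this
      exact hlt.ne' this
    rw [mem_myP_of_not_mem habN, QuotientGroup.mk_mul]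
    exact hlt

lemma total_myP (h1 : ∀ a b c : ↥N, a ≤ b → c * a ≤ c * b)
    (h2 : ∀ a b c : G ⧸ N, a ≤ b → c * a ≤ c * b)
    (g : G) : g ∈ myP N ∨ g⁻¹ ∈ myP N := by
  by_cases hg : g ∈ N
  · rcases le_total 1 (⟨g, hg⟩ : ↥N) with h | h
    · exact Or.inl ((mem_myP_of_mem hg).mpr h)
    · exact Or.inr ((mem_myP_of_mem (inv_mem hg)).mpr (gen_one_le_inv h1 h))
  · rcases lt_trichotomy (1 : G ⧸ N) (QuotientGroup.mk g) with h | h | h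
    · exact Or.inl ((mem_myP_of_not_mem hg).mpr h)
    · exact absurd h.symm (fun he => hg ((QuotientGroup.eq_one_iff g).mp he))
    · refine Or.inr ((mem_myP_of_not_mem (fun hi => hg (by simpa using inv_mem hi))).mpr ?_)
      rw [QuotientGroup.mk_inv]
      exact gen_one_lt_inv h2 h

lemma eq_one_of_myP (h1 : ∀ a b c : ↥N, a ≤ b → c * a ≤ c * b)
    (h2 : ∀ a b c : G ⧸ N, a ≤ b → c * a ≤ c * b)
    {g : G} (hg : g ∈ myP N) (hg' : g⁻¹ ∈ myP N) : g = 1 := by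
  by_cases hgN : g ∈ N
  · rw [mem_myP_of_mem hgN] at hg
    rw [mem_myP_of_mem (inv_mem hgN)] at hg'
    have hinv : (1 : ↥N) ≤ (⟨g, hgN⟩ : ↥N)⁻¹ := hg'
    have : (⟨g, hgN⟩ : ↥N) ≤ 1 := by
      have := h1 1 (⟨g, hgN⟩ : ↥N)⁻¹ (⟨g, hgN⟩ : ↥N) hinv
      rwa [mul_one, mul_inv_cancel] at this
    have : (⟨g, hgN⟩ : ↥N) = 1 := le_antisymm this hg
    exact congrArg Subtype.val this
  · rw [mem_myP_of_not_mem hgN] at hg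
    rw [mem_myP_of_not_mem (fun hi => hgN (by simpa using inv_mem hi))] at hg'
    rw [QuotientGroup.mk_inv] at hg'
    exact absurd (gen_not_both h2 hg hg') (fun h => h)

lemma N_convex_myP (h2 : ∀ a b c : G ⧸ N, a ≤ b → c * a ≤ c * b) {a b c : G} (hab : a⁻¹ * b ∈ myP N) (hbc : b⁻¹ * c ∈ myP N)
    (ha : a ∈ N) (hc : c ∈ N) : b ∈ N := by
  by_cases hb : b ∈ N
  · exact hb
  have h1N : a⁻¹ * b ∉ N := fun h => hb (by simpa using mul_mem ha h)
  have h2N : b⁻¹ * c ∉ N := by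
    intro h
    exact hb (by simpa using mul_mem hc (inv_mem h))
  rw [mem_myP_of_not_mem h1N] at hab
  rw [mem_myP_of_not_mem h2N] at hbc
  rw [QuotientGroup.mk_mul, QuotientGroup.mk_inv,
    (QuotientGroup.eq_one_iff a).mpr ha, inv_one, one_mul] at hab
  rw [QuotientGroup.mk_mul, QuotientGroup.mk_inv,
    (QuotientGroup.eq_one_iff c).mpr hc, mul_one] at hbc
  exact absurd trivial (fun _ => gen_not_both h2 hab hbc)

end PAux



/-- Convexity of a subgroup with respect to an abstract order relation `r`. -/
def IsConvexRel {H : Type*} [Group H] (r : H → H → Prop) (C : Subgroup H) : Prop :=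
  ∀ a b c : H, r a b → r b c → a ∈ C → c ∈ C → b ∈ C

/-- Convexity of a subgroup of a left-ordered group. -/
def IsConvexIn {H : Type*} [Group H] [LinearOrder H] (C : Subgroup H) : Prop :=
  ∀ a b c : H, a ≤ b → b ≤ c → a ∈ C → c ∈ C → b ∈ C

/-- Let `G` be locally indicable, `N ⊴ G`, `≤₁` a Conradian left-order on
`N` and `≤₂` a Conradian left-order on `G/N`. Then
`P = P_{≤₁} ∪ {g | eN <₂ gN}` is the positive cone of a left-order `≤` of `G` (given by
`a ≤ b ↔ a⁻¹b ∈ P`); a subgroup `U` is convex for `≤` iff `U ⊆ N` and `U` is convex in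
`N`, or `N ⊆ U` and `U/N` is convex in `G/N`; and `≤` is Conradian. -/
theorem stmt19 {G : Type*} [Group G] (N : Subgroup G) [N.Normal]
    (hli : ∀ H : Subgroup G, H ≠ ⊥ → H.FG →
      ∃ f : ↥H →* Multiplicative ℤ, Function.Surjective f)
    [LinearOrder ↥N] [LinearOrder (G ⧸ N)]
    (hinv1 : ∀ a b c : ↥N, a ≤ b → c * a ≤ c * b)
    (hc1 : ∀ a b : ↥N, 1 < a → 1 < b → ∃ n : ℕ, a * b < (b * a) ^ n)
    (hinv2 : ∀ a b c : G ⧸ N, a ≤ b → c * a ≤ c * b)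
    (hc2 : ∀ a b : G ⧸ N, 1 < a → 1 < b → ∃ n : ℕ, a * b < (b * a) ^ n) :
    ∀ P : Set G, P = {g : G | ∃ h : ↥N, (h : G) = g ∧ 1 ≤ h} ∪
        {g : G | (1 : G ⧸ N) < QuotientGroup.mk g} →
    ∀ r : G → G → Prop, r = (fun a b : G => a⁻¹ * b ∈ P) →
    -- `r` is a left-order of `G` with positive cone `P`
    ((∀ a, r a a) ∧ (∀ a b, r a b → r b a → a = b) ∧
      (∀ a b c, r a b → r b c → r a c) ∧ (∀ a b, r a b ∨ r b a) ∧
      (∀ a b c, r a b → r (c * a) (c * b)) ∧ {a : G | r 1 a} = P) ∧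
    -- characterization of the convex subgroups of `r`
    (∀ U : Subgroup G, IsConvexRel r U ↔
      ((U ≤ N ∧ IsConvexIn (U.subgroupOf N)) ∨
        (N ≤ U ∧ IsConvexIn (U.map (QuotientGroup.mk' N))))) ∧
    -- `r` is Conradian
    (∀ a b : G, r 1 a → a ≠ 1 → r 1 b → b ≠ 1 →
      ∃ n : ℕ, r (a * b) ((b * a) ^ n) ∧ a * b ≠ (b * a) ^ n) := by
  intro P hP r hr
  subst hP
  subst hr
  refine ⟨⟨fun a => ?_, fun a b hab hba => ?_, fun a b c hab hbc => ?_,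
    fun a b => ?_, fun a b c hab => ?_, ?_⟩, fun U => ?_, fun a b ha ha1 hb hb1 => ?_⟩
  -- reflexivity
  · show a⁻¹ * a ∈ myP N
    rw [inv_mul_cancel]
    exact one_mem_myP
  -- antisymmetry
  · replace hab : a⁻¹ * b ∈ myP N := hab
    have h2 : (a⁻¹ * b)⁻¹ ∈ myP N := by
      rw [mul_inv_rev, inv_inv]; exact hba
    exact inv_mul_eq_one.mp (eq_one_of_myP hinv1 hinv2 hab h2) |>.symm ▸ rfl
  -- transitivity
  · replace hab : a⁻¹ * b ∈ myP N := hab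
    replace hbc : b⁻¹ * c ∈ myP N := hbc
    show a⁻¹ * c ∈ myP N
    have := mul_mem_myP hinv1 hinv2 hab hbc
    rwa [mul_assoc, mul_inv_cancel_left] at this
  -- totality
  · rcases total_myP hinv1 hinv2 (a⁻¹ * b) with h | h
    · exact Or.inl h
    · exact Or.inr (by show b⁻¹ * a ∈ myP N; rwa [mul_inv_rev, inv_inv] at h)
  -- left invariance
  · show (c * a)⁻¹ * (c * b) ∈ myP N
    rw [mul_inv_rev, mul_assoc, inv_mul_cancel_left]
    exact hab
  -- positive cone
  · ext a
    simp only [Set.mem_setOf_eq, inv_one, one_mul]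
  -- convex subgroups
  · constructor
    · intro hU
      by_cases hUN : U ≤ N
      · left
        refine ⟨hUN, fun x y z hxy hyz hx hz => ?_⟩
        rw [Subgroup.mem_subgroupOf] at hx hz ⊢
        refine hU (x : G) (y : G) (z : G) ?_ ?_ hx hz
        · exact Or.inl ⟨x⁻¹ * y, by push_cast; rfl, gen_one_le hinv1 hxy⟩
        · exact Or.inl ⟨y⁻¹ * z, by push_cast; rfl, gen_one_le hinv1 hyz⟩
      · right
        simp only [SetLike.le_def, not_forall] at hUN
        obtain ⟨u0, hu0U, hu0N⟩ := hUN
        obtain ⟨u, huU, huN, huP⟩ : ∃ u, u ∈ U ∧ u ∉ N ∧ u ∈ myP N := by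
          rcases total_myP hinv1 hinv2 u0 with h | h
          · exact ⟨u0, hu0U, hu0N, h⟩
          · exact ⟨u0⁻¹, inv_mem hu0U, fun hi => hu0N (by simpa using inv_mem hi), h⟩
        have hNU : N ≤ U := by
          have hpos : ∀ v, v ∈ N → v ∈ myP N → v ∈ U := by
            intro v hvN hvP
            rcases total_myP hinv1 hinv2 (v⁻¹ * u) with h | h
            · exact hU 1 v u (show (1 : G)⁻¹ * v ∈ myP N by rwa [inv_one, one_mul]) h
                (one_mem U) huU
            · have h' : u⁻¹ * v ∈ myP N := by rwa [mul_inv_rev, inv_inv] at h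
              exact absurd (N_convex_myP hinv2
                (show (1 : G)⁻¹ * u ∈ myP N by rwa [inv_one, one_mul]) h'
                (one_mem N) hvN) huN
          intro v hv
          rcases total_myP hinv1 hinv2 v with h | h
          · exact hpos v hv h
          · simpa using inv_mem (hpos v⁻¹ (inv_mem hv) h)
        refine ⟨hNU, fun x y z hxy hyz hx hz => ?_⟩
        obtain ⟨gu, hguU, rfl⟩ := Subgroup.mem_map.mp hx
        obtain ⟨gw, hgwU, rfl⟩ := Subgroup.mem_map.mp hz
        rcases eq_or_lt_of_le hxy with he | hlt
        · rw [← he]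
          exact Subgroup.mem_map.mpr ⟨gu, hguU, rfl⟩
        rcases eq_or_lt_of_le hyz with he2 | hlt2
        · rw [he2]
          exact Subgroup.mem_map.mpr ⟨gw, hgwU, rfl⟩
        obtain ⟨g, hg⟩ := QuotientGroup.mk_surjective y
        have r1 : gu⁻¹ * g ∈ myP N := by
          refine Or.inr ?_
          have hkey : (QuotientGroup.mk (gu⁻¹ * g) : G ⧸ N) =
              ((QuotientGroup.mk' N) gu)⁻¹ * y := by
            rw [QuotientGroup.mk_mul, QuotientGroup.mk_inv, hg]; rfl
          show (1 : G ⧸ N) < _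
          rw [hkey]
          exact gen_one_lt hinv2 hlt
        have r2 : g⁻¹ * gw ∈ myP N := by
          refine Or.inr ?_
          have hkey : (QuotientGroup.mk (g⁻¹ * gw) : G ⧸ N) =
              y⁻¹ * (QuotientGroup.mk' N) gw := by
            rw [QuotientGroup.mk_mul, QuotientGroup.mk_inv, hg]; rfl
          show (1 : G ⧸ N) < _
          rw [hkey]
          exact gen_one_lt hinv2 hlt2
        exact Subgroup.mem_map.mpr ⟨g, hU gu g gw r1 r2 hguU hgwU,
          by rw [QuotientGroup.mk'_apply, hg]⟩
    · rintro (⟨hUN, hconv⟩ | ⟨hNU, hconv⟩) <;> intro a b c hab hbc ha hc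
      · replace hab : a⁻¹ * b ∈ myP N := hab
        replace hbc : b⁻¹ * c ∈ myP N := hbc
        have hbN : b ∈ N := N_convex_myP hinv2 hab hbc (hUN ha) (hUN hc)
        have habN : a⁻¹ * b ∈ N := mul_mem (inv_mem (hUN ha)) hbN
        have hbcN : b⁻¹ * c ∈ N := mul_mem (inv_mem hbN) (hUN hc)
        rw [mem_myP_of_mem habN] at hab
        rw [mem_myP_of_mem hbcN] at hbc
        have h1 : (⟨a, hUN ha⟩ : ↥N) ≤ ⟨b, hbN⟩ := gen_le_of hinv1 hab
        have h2 : (⟨b, hbN⟩ : ↥N) ≤ ⟨c, hUN hc⟩ := gen_le_of hinv1 hbc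
        have := hconv ⟨a, hUN ha⟩ ⟨b, hbN⟩ ⟨c, hUN hc⟩ h1 h2
          (Subgroup.mem_subgroupOf.mpr ha) (Subgroup.mem_subgroupOf.mpr hc)
        exact Subgroup.mem_subgroupOf.mp this
      · replace hab : a⁻¹ * b ∈ myP N := hab
        replace hbc : b⁻¹ * c ∈ myP N := hbc
        have q1 : (QuotientGroup.mk a : G ⧸ N) ≤ QuotientGroup.mk b := by
          rcases hab with ⟨h, he, hh⟩ | h
          · exact le_of_eq (QuotientGroup.eq.mpr (he ▸ h.2))
          · refine (gen_lt_of hinv2 ?_).le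
            have h' : (1 : G ⧸ N) < QuotientGroup.mk (a⁻¹ * b) := h
            rwa [QuotientGroup.mk_mul, QuotientGroup.mk_inv] at h'
        have q2 : (QuotientGroup.mk b : G ⧸ N) ≤ QuotientGroup.mk c := by
          rcases hbc with ⟨h, he, hh⟩ | h
          · exact le_of_eq (QuotientGroup.eq.mpr (he ▸ h.2))
          · refine (gen_lt_of hinv2 ?_).le
            have h' : (1 : G ⧸ N) < QuotientGroup.mk (b⁻¹ * c) := h
            rwa [QuotientGroup.mk_mul, QuotientGroup.mk_inv] at h'
        have := hconv (QuotientGroup.mk a) (QuotientGroup.mk b) (QuotientGroup.mk c) q1 q2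
          (Subgroup.mem_map.mpr ⟨a, ha, rfl⟩) (Subgroup.mem_map.mpr ⟨c, hc, rfl⟩)
        obtain ⟨w, hwU, hw⟩ := Subgroup.mem_map.mp this
        have hwb : w⁻¹ * b ∈ N := QuotientGroup.eq.mp hw
        have : b ∈ U := by
          have := mul_mem hwU (hNU hwb)
          simpa using this
        exact this
  -- Conradian
  · replace ha : a ∈ myP N := by
      have h : 1⁻¹ * a ∈ myP N := ha
      rwa [inv_one, one_mul] at h
    replace hb : b ∈ myP N := by
      have h : 1⁻¹ * b ∈ myP N := hb
      rwa [inv_one, one_mul] at h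
    by_cases haN : a ∈ N <;> by_cases hbN : b ∈ N
    · -- both in N
      have hx : (1 : ↥N) < ⟨a, haN⟩ :=
        lt_of_le_of_ne ((mem_myP_of_mem haN).mp ha) (fun h => ha1 (congrArg Subtype.val h.symm))
      have hy : (1 : ↥N) < ⟨b, hbN⟩ :=
        lt_of_le_of_ne ((mem_myP_of_mem hbN).mp hb) (fun h => hb1 (congrArg Subtype.val h.symm))
      obtain ⟨n, hn⟩ := hc1 ⟨a, haN⟩ ⟨b, hbN⟩ hx hy
      refine ⟨n, ?_, ?_⟩
      · refine Or.inl ⟨(⟨a, haN⟩ * ⟨b, hbN⟩ : ↥N)⁻¹ * (⟨b, hbN⟩ * ⟨a, haN⟩) ^ n, ?_,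
          (gen_one_lt hinv1 hn).le⟩
        push_cast
        rfl
      · intro heq
        apply hn.ne
        apply Subtype.ext
        push_cast
        exact heq
    · -- a ∈ N, b ∉ N
      have hπa : (QuotientGroup.mk a : G ⧸ N) = 1 := (QuotientGroup.eq_one_iff a).mpr haN
      have hbq : (1 : G ⧸ N) < QuotientGroup.mk b := (mem_myP_of_not_mem hbN).mp hb
      have key : (QuotientGroup.mk ((a * b)⁻¹ * (b * a) ^ 2) : G ⧸ N) = QuotientGroup.mk b := by
        rw [QuotientGroup.mk_mul, QuotientGroup.mk_inv, QuotientGroup.mk_mul,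
          QuotientGroup.mk_pow, QuotientGroup.mk_mul, hπa, one_mul, mul_one, pow_two,
          inv_mul_cancel_left]
      refine ⟨2, Or.inr (show (1 : G ⧸ N) < _ by rw [key]; exact hbq), ?_⟩
      intro heq
      have h1 : (QuotientGroup.mk (a * b) : G ⧸ N) = QuotientGroup.mk ((b * a) ^ 2) :=
        congrArg _ heq
      rw [QuotientGroup.mk_mul, QuotientGroup.mk_pow, QuotientGroup.mk_mul, hπa, one_mul,
        mul_one, pow_two] at h1
      have h2 := gen_mul_lt hinv2 (QuotientGroup.mk b) hbq
      rw [mul_one] at h2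
      exact h2.ne h1
    · -- a ∉ N, b ∈ N
      have hπb : (QuotientGroup.mk b : G ⧸ N) = 1 := (QuotientGroup.eq_one_iff b).mpr hbN
      have haq : (1 : G ⧸ N) < QuotientGroup.mk a := (mem_myP_of_not_mem haN).mp ha
      have key : (QuotientGroup.mk ((a * b)⁻¹ * (b * a) ^ 2) : G ⧸ N) = QuotientGroup.mk a := by
        rw [QuotientGroup.mk_mul, QuotientGroup.mk_inv, QuotientGroup.mk_mul,
          QuotientGroup.mk_pow, QuotientGroup.mk_mul, hπb, one_mul, mul_one, pow_two,
          inv_mul_cancel_left]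
      refine ⟨2, Or.inr (show (1 : G ⧸ N) < _ by rw [key]; exact haq), ?_⟩
      intro heq
      have h1 : (QuotientGroup.mk (a * b) : G ⧸ N) = QuotientGroup.mk ((b * a) ^ 2) :=
        congrArg _ heq
      rw [QuotientGroup.mk_mul, QuotientGroup.mk_pow, QuotientGroup.mk_mul, hπb, one_mul,
        mul_one, pow_two] at h1
      have h2 := gen_mul_lt hinv2 (QuotientGroup.mk a) haq
      rw [mul_one] at h2
      exact h2.ne h1
    · -- both not in N
      have haq : (1 : G ⧸ N) < QuotientGroup.mk a := (mem_myP_of_not_mem haN).mp ha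
      have hbq : (1 : G ⧸ N) < QuotientGroup.mk b := (mem_myP_of_not_mem hbN).mp hb
      obtain ⟨n, hn⟩ := hc2 (QuotientGroup.mk a) (QuotientGroup.mk b) haq hbq
      have key : (QuotientGroup.mk ((a * b)⁻¹ * (b * a) ^ n) : G ⧸ N) =
          (QuotientGroup.mk a * QuotientGroup.mk b)⁻¹ *
            (QuotientGroup.mk b * QuotientGroup.mk a) ^ n := by
        rw [QuotientGroup.mk_mul, QuotientGroup.mk_inv, QuotientGroup.mk_mul,
          QuotientGroup.mk_pow, QuotientGroup.mk_mul]
      refine ⟨n, Or.inr (show (1 : G ⧸ N) < _ by rw [key]; exact gen_one_lt hinv2 hn), ?_⟩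
      intro heq
      have h1 : (QuotientGroup.mk (a * b) : G ⧸ N) = QuotientGroup.mk ((b * a) ^ n) :=
        congrArg _ heq
      rw [QuotientGroup.mk_mul, QuotientGroup.mk_pow, QuotientGroup.mk_mul] at h1
      exact hn.ne h1
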